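/- For every atom p, the weak excluded middle formula ¬p ∨ ¬¬p is E*-valid, where E* is the ruleset E with rule D10 replaced by rule D10*: Proponent may assert an atom p only if Opponent has asserted p or ¬p before. -/
import Mathlib


/- Formalization of Lorenzen dialogue games, following Felscher's presentation.

   Propositional formulas are built from atoms using ¬, ∧, ∨, →.  A dialogue
   for a formula φ is a sequence of moves beginning with Proponent (P)
   asserting φ at position 0, with O moving at odd positions and P at even
   positions.  Each later move attacks or defends an earlier move of the other
   player, according to the particle rules.  Structural rules (D10, D11, D12,
   D13, E, and the variants D10*, D10′) constrain dialogues further.  P wins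
   if P made the last move and no moves are available to O; φ is S-valid if P
   has an S-winning strategy for φ. -/

namespace LorenzenDialogues

/-- Propositional formulas: atoms, ¬, ∧, ∨, →. -/
inductive Formula : Type
  | atom : ℕ → Formula
  | neg  : Formula → Formula
  | and  : Formula → Formula → Formula
  | or   : Formula → Formula → Formula
  | imp  : Formula → Formula → Formula
deriving DecidableEq

/-- Statements: formulas together with the symbolic attacks `?`, `∧_L`, `∧_R`. -/
inductive Statement : Type
  | form  : Formula → Statement
  | qmark : Statement
  | andL  : Statement
  | andR  : Statement
deriving DecidableEq

/-- Particle rules, attack part: which statements attack which formulas. -/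
inductive Attacks : Statement → Formula → Prop
  | andL (a b : Formula) : Attacks .andL (.and a b)
  | andR (a b : Formula) : Attacks .andR (.and a b)
  | qmark (a b : Formula) : Attacks .qmark (.or a b)
  | imp (a b : Formula) : Attacks (.form a) (.imp a b)
  | neg (a : Formula) : Attacks (.form a) (.neg a)

/-- Particle rules, defense part: `Defends χ a s` means `s` is a permitted
    defense of the formula `χ` against the attack `a`.  (A negation admits
    no defense.) -/
inductive Defends : Formula → Statement → Statement → Prop
  | andL (a b : Formula) : Defends (.and a b) .andL (.form a)
  | andR (a b : Formula) : Defends (.and a b) .andR (.form b)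
  | orL (a b : Formula) : Defends (.or a b) .qmark (.form a)
  | orR (a b : Formula) : Defends (.or a b) .qmark (.form b)
  | imp (a b : Formula) : Defends (.imp a b) (.form a) (.form b)

/-- A move: a statement, a flag recording whether it is an attack (`true`)
    or a defense (`false`), and the position of the earlier move it attacks,
    resp. the earlier attack it defends against. -/
structure Move : Type where
  statement : Statement
  isAttack : Bool
  ref : ℕ
deriving DecidableEq

/-- A dialogue: the initial formula asserted by P at position 0, followed by
    the list of later moves (the move at list index `i` occupies position
    `i + 1`; O moves at odd positions, P at even positions). -/
structure Dialogue : Type where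
  initial : Formula
  moves : List Move

/-- The statement asserted at position `n` (if any). -/
def Dialogue.stmtAt (d : Dialogue) (n : ℕ) : Option Statement :=
  if n = 0 then some (.form d.initial) else (d.moves[n - 1]?).map Move.statement

/-- The move at position `n ≥ 1` (if any); position 0 is the initial assertion,
    not a move. -/
def Dialogue.moveAt (d : Dialogue) (n : ℕ) : Option Move :=
  if n = 0 then none else d.moves[n - 1]?

/-- The move `m`, played at position `n ≥ 1`, is permitted by the particle
    rules: it refers to an earlier position of the other player; if it is an
    attack, it attacks a formula asserted there, and if it is a defense, it
    responds to an attack played there, as the particle rules prescribe. -/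
def MoveOK (d : Dialogue) (n : ℕ) (m : Move) : Prop :=
  m.ref < n ∧ m.ref % 2 ≠ n % 2 ∧
    (m.isAttack = true →
      ∃ ψ, d.stmtAt m.ref = some (.form ψ) ∧ Attacks m.statement ψ) ∧
    (m.isAttack = false →
      ∃ a χ, d.moveAt m.ref = some a ∧ a.isAttack = true ∧
        d.stmtAt a.ref = some (.form χ) ∧ Defends χ a.statement m.statement)

/-- The dialogue adheres to the particle rules (every move is legal). -/
def ParticleOK (d : Dialogue) : Prop :=
  ∀ i m, d.moves[i]? = some m → MoveOK d (i + 1) m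

/-- Position `n` carries a defense of the attack made at position `r`. -/
def IsDefenseOf (d : Dialogue) (n r : ℕ) : Prop :=
  ∃ m, d.moveAt n = some m ∧ m.isAttack = false ∧ m.ref = r

/-- Position `n` carries an attack on the assertion made at position `r`. -/
def IsAttackOn (d : Dialogue) (n r : ℕ) : Prop :=
  ∃ m, d.moveAt n = some m ∧ m.isAttack = true ∧ m.ref = r

/-- Position `n` carries an attack. -/
def IsAttackPos (d : Dialogue) (n : ℕ) : Prop :=
  ∃ m, d.moveAt n = some m ∧ m.isAttack = true

/-- The attack at position `r` is still open (no defense against it has yet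
    been played) before position `k`. -/
def OpenAt (d : Dialogue) (r k : ℕ) : Prop :=
  IsAttackPos d r ∧ ¬ ∃ j, j < k ∧ IsDefenseOf d j r

/-- (D10) P may assert an atomic formula only after it has been asserted by O
    before. -/
def D10 (d : Dialogue) : Prop :=
  ∀ n p, n % 2 = 0 → d.stmtAt n = some (.form (.atom p)) →
    ∃ j, j < n ∧ j % 2 = 1 ∧ d.stmtAt j = some (.form (.atom p))

/-- (D10*) P may assert an atom `p` only if O has asserted `p` or `¬p`
    before. -/
def D10star (d : Dialogue) : Prop :=
  ∀ n p, n % 2 = 0 → d.stmtAt n = some (.form (.atom p)) →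
    ∃ j, j < n ∧ j % 2 = 1 ∧
      (d.stmtAt j = some (.form (.atom p)) ∨
        d.stmtAt j = some (.form (.neg (.atom p))))

/-- (D10′) P may assert an atom `p` only if O has asserted `p` or `¬¬p`
    before. -/
def D10prime (d : Dialogue) : Prop :=
  ∀ n p, n % 2 = 0 → d.stmtAt n = some (.form (.atom p)) →
    ∃ j, j < n ∧ j % 2 = 1 ∧
      (d.stmtAt j = some (.form (.atom p)) ∨
        d.stmtAt j = some (.form (.neg (.neg (.atom p)))))

/-- (D11) When defending, only the most recent open attack may be responded
    to: the attack defended against is open, and no strictly more recent open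
    attack (against the same player) exists. -/
def D11 (d : Dialogue) : Prop :=
  ∀ n r, IsDefenseOf d n r →
    OpenAt d r n ∧ ¬ ∃ r', r < r' ∧ r' < n ∧ r' % 2 = r % 2 ∧ OpenAt d r' n

/-- (D12) An attack may be answered at most once. -/
def D12 (d : Dialogue) : Prop :=
  ∀ n₁ n₂ r, IsDefenseOf d n₁ r → IsDefenseOf d n₂ r → n₁ = n₂

/-- (D13) A P-assertion (made at an even position) may be attacked at most
    once. -/
def D13 (d : Dialogue) : Prop :=
  ∀ n₁ n₂ r, r % 2 = 0 → IsAttackOn d n₁ r → IsAttackOn d n₂ r → n₁ = n₂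

/-- (E) O can react only upon the immediately preceding P-statement. -/
def ERule (d : Dialogue) : Prop :=
  ∀ n m, n % 2 = 1 → d.moveAt n = some m → m.ref = n - 1

/-- A ruleset is a set of structural rules, i.e. a predicate on dialogues. -/
def Ruleset := Dialogue → Prop

/-- Ruleset D = {D10, D11, D12, D13}. -/
def rulesetD : Ruleset := fun d => D10 d ∧ D11 d ∧ D12 d ∧ D13 d

/-- Ruleset E = D ∪ {E}. -/
def rulesetE : Ruleset := fun d => rulesetD d ∧ ERule d

/-- Ruleset CL = E − {D11, D12} = {D10, D13, E}. -/
def rulesetCL : Ruleset := fun d => D10 d ∧ D13 d ∧ ERule d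

/-- Ruleset N = D − {D11, D12} = {D10, D13}. -/
def rulesetN : Ruleset := fun d => D10 d ∧ D13 d

/-- Ruleset E* = {D10*, D11, D12, D13, E}. -/
def rulesetEstar : Ruleset :=
  fun d => D10star d ∧ D11 d ∧ D12 d ∧ D13 d ∧ ERule d

/-- Ruleset E′ = {D10′, D11, D12, D13, E}. -/
def rulesetEprime : Ruleset :=
  fun d => D10prime d ∧ D11 d ∧ D12 d ∧ D13 d ∧ ERule d

/-- An S-dialogue: a dialogue adhering to the particle rules and to the
    structural rules S. -/
def Legal (S : Ruleset) (d : Dialogue) : Prop := ParticleOK d ∧ S d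

/-- Extend a dialogue by one move. -/
def Dialogue.extend (d : Dialogue) (m : Move) : Dialogue :=
  ⟨d.initial, d.moves ++ [m]⟩

/-- The position about to be played. -/
def nextPos (d : Dialogue) : ℕ := d.moves.length + 1

/-- It is P's turn (the next position is even). -/
def PTurn (d : Dialogue) : Prop := nextPos d % 2 = 0

/-- The move `m` legally extends the S-dialogue `d`. -/
def LegalExt (S : Ruleset) (d : Dialogue) (m : Move) : Prop :=
  Legal S (d.extend m)

/-- `PWinningC S C d` holds when P, moving under the additional constraint
    `C` on P's own choices, has a winning strategy in the S-dialogue game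
    continuing the dialogue `d`: at P's turn, P has a legal move (satisfying
    `C`) after which P is still winning; at O's turn, every legal O-move
    leads to a position where P is winning (in particular, if no O-move is
    available, P has won: P made the last move and O cannot move). -/
inductive PWinningC (S : Ruleset) (C : Dialogue → Move → Prop) : Dialogue → Prop
  | pMove (d : Dialogue) (m : Move) (hturn : PTurn d)
      (hm : LegalExt S d m) (hC : C d m)
      (h : PWinningC S C (d.extend m)) : PWinningC S C d
  | oMoves (d : Dialogue) (hturn : ¬ PTurn d)
      (h : ∀ m, LegalExt S d m → PWinningC S C (d.extend m)) :
      PWinningC S C d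

/-- P has a winning strategy continuing the S-dialogue `d`. -/
def PWinning (S : Ruleset) (d : Dialogue) : Prop :=
  PWinningC S (fun _ _ => True) d

/-- `valid S φ` (written `⊨_S φ`): the opening assertion of φ is itself a
    legal S-dialogue and P has an S-winning strategy for φ. -/
def valid (S : Ruleset) (φ : Formula) : Prop :=
  Legal S ⟨φ, []⟩ ∧ PWinning S ⟨φ, []⟩

/-- Derivability in intuitionistic propositional logic (a Hilbert-style
    axiomatization with modus ponens). -/
inductive IProv : Formula → Prop
  | k (a b : Formula) : IProv (.imp a (.imp b a))
  | s (a b c : Formula) :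
      IProv (.imp (.imp a (.imp b c)) (.imp (.imp a b) (.imp a c)))
  | andE1 (a b : Formula) : IProv (.imp (.and a b) a)
  | andE2 (a b : Formula) : IProv (.imp (.and a b) b)
  | andI (a b : Formula) : IProv (.imp a (.imp b (.and a b)))
  | orI1 (a b : Formula) : IProv (.imp a (.or a b))
  | orI2 (a b : Formula) : IProv (.imp b (.or a b))
  | orE (a b c : Formula) :
      IProv (.imp (.imp a c) (.imp (.imp b c) (.imp (.or a b) c)))
  | negI (a b : Formula) :
      IProv (.imp (.imp a b) (.imp (.imp a (.neg b)) (.neg a)))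
  | negE (a b : Formula) : IProv (.imp (.neg a) (.imp a b))
  | mp (a b : Formula) : IProv (.imp a b) → IProv a → IProv b

/-- The stability principle ¬¬p → p for the atom `p`. -/
def stab (p : ℕ) : Formula := .imp (.neg (.neg (.atom p))) (.atom p)

/-- Stable logic: intuitionistic propositional logic plus all instances of
    the stability scheme ¬¬p → p for atoms p, closed under modus ponens. -/
inductive StableProv : Formula → Prop
  | intuit (a : Formula) : IProv a → StableProv a
  | stab (p : ℕ) : StableProv (stab p)
  | mp (a b : Formula) : StableProv (.imp a b) → StableProv a → StableProv b

/-- Boolean evaluation of a formula under a valuation of its atoms. -/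
def Formula.eval (v : ℕ → Bool) : Formula → Bool
  | .atom p => v p
  | .neg a => !(a.eval v)
  | .and a b => a.eval v && b.eval v
  | .or a b => a.eval v || b.eval v
  | .imp a b => !(a.eval v) || b.eval v

/-- A classical tautology: true under every Boolean valuation. -/
def Tautology (φ : Formula) : Prop := ∀ v, φ.eval v = true

/-- Uniform substitution of formulas for atoms, applied homomorphically. -/
def Formula.subst (σ : ℕ → Formula) : Formula → Formula
  | .atom p => σ p
  | .neg a => .neg (a.subst σ)
  | .and a b => .and (a.subst σ) (b.subst σ)
  | .or a b => .or (a.subst σ) (b.subst σ)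
  | .imp a b => .imp (a.subst σ) (b.subst σ)

/-- The atoms occurring in a formula. -/
def Formula.atoms : Formula → List ℕ
  | .atom p => [p]
  | .neg a => a.atoms
  | .and a b => a.atoms ++ b.atoms
  | .or a b => a.atoms ++ b.atoms
  | .imp a b => a.atoms ++ b.atoms

/-- Conjunction of a nonempty list of formulas. -/
def conjList (f : Formula) : List Formula → Formula
  | [] => f
  | g :: gs => .and f (conjList g gs)

/-- The conjunction (¬¬p → p) ∧ … of stability instances for the atoms
    `p :: ps`. -/
def stabConj (p : ℕ) (ps : List ℕ) : Formula :=
  conjList (stab p) (ps.map stab)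



/-! ### Auxiliary material for `wem_Estar_valid` -/

section WEM

/-- The weak excluded middle formula. -/
private def Fwem (p : ℕ) : Formula :=
  .or (.neg (.atom p)) (.neg (.neg (.atom p)))

private def dlg (p : ℕ) (l : List Move) : Dialogue := ⟨Fwem p, l⟩

private def M1 : Move := ⟨.qmark, true, 0⟩
private def M2 (p : ℕ) : Move := ⟨.form (.neg (.neg (.atom p))), false, 1⟩
private def M3 (p : ℕ) : Move := ⟨.form (.neg (.atom p)), true, 2⟩
private def M4 (p : ℕ) : Move := ⟨.form (.atom p), true, 3⟩

private lemma legal0 (p : ℕ) : Legal rulesetEstar (dlg p []) := by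
  constructor
  · intro i m h
    simp [dlg] at h
  · refine ⟨?_, ?_, ?_, ?_, ?_⟩
    · intro n q hn hs
      match n with
      | 0 => simp [dlg, Dialogue.stmtAt, Fwem] at hs
      | k+1 => simp [dlg, Dialogue.stmtAt] at hs
    · intro n r hd
      obtain ⟨m, hm, _, _⟩ := hd
      match n with
      | 0 => simp [dlg, Dialogue.moveAt] at hm
      | k+1 => simp [dlg, Dialogue.moveAt] at hm
    · intro n₁ n₂ r h₁ h₂
      obtain ⟨m, hm, _, _⟩ := h₁
      match n₁ with
      | 0 => simp [dlg, Dialogue.moveAt] at hm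
      | k+1 => simp [dlg, Dialogue.moveAt] at hm
    · intro n₁ n₂ r _ h₁ h₂
      obtain ⟨m, hm, _, _⟩ := h₁
      match n₁ with
      | 0 => simp [dlg, Dialogue.moveAt] at hm
      | k+1 => simp [dlg, Dialogue.moveAt] at hm
    · intro n m hn hm
      match n with
      | 0 => simp [dlg, Dialogue.moveAt] at hm
      | k+1 => simp [dlg, Dialogue.moveAt] at hm

private lemma legal2 (p : ℕ) : Legal rulesetEstar (dlg p [M1, M2 p]) := by
  constructor
  · intro i m h
    match i with
    | 0 =>
      simp [dlg] at h
      subst h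
      refine ⟨by norm_num [M1, M2 ,M3, M4], by norm_num [M1, M2, M3, M4], ?_, ?_⟩
      · intro _
        exact ⟨Fwem p, by simp [dlg, Dialogue.stmtAt, M1], Attacks.qmark _ _⟩
      · intro h; simp [M1] at h
    | 1 =>
      simp [dlg] at h
      subst h
      refine ⟨by norm_num [M1, M2 ,M3, M4], by norm_num [M1, M2, M3, M4], ?_, ?_⟩
      · intro h; simp [M2] at h
      · intro _
        refine ⟨M1, Formula.or (.neg (.atom p)) (.neg (.neg (.atom p))), ?_, rfl, ?_, ?_⟩
        · simp [dlg, Dialogue.moveAt, M1, M2]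
        · simp [dlg, Dialogue.stmtAt, M1, Fwem]
        · exact Defends.orR _ _
    | k+2 => simp [dlg] at h
  · refine ⟨?_, ?_, ?_, ?_, ?_⟩
    · intro n q hn hs
      match n with
      | 0 => simp [dlg, Dialogue.stmtAt, Fwem] at hs
      | 1 => simp [dlg, Dialogue.stmtAt, M1] at hs
      | 2 => simp [dlg, Dialogue.stmtAt, M2] at hs
      | k+3 => simp [dlg, Dialogue.stmtAt] at hs
    · intro n r hd
      obtain ⟨m, hm, hA, hr⟩ := hd
      match n with
      | 0 => simp [dlg, Dialogue.moveAt] at hm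
      | 1 => simp [dlg, Dialogue.moveAt, M1] at hm; subst hm; simp [M1] at hA
      | 2 =>
        simp [dlg, Dialogue.moveAt, M2] at hm; subst hm
        simp [M2] at hr; subst hr
        refine ⟨⟨⟨M1, by simp [dlg, Dialogue.moveAt], rfl⟩, ?_⟩, ?_⟩
        · rintro ⟨j, hj, mj, hmj, hAj, hrj⟩
          match j with
          | 0 => simp [dlg, Dialogue.moveAt] at hmj
          | 1 => simp [dlg, Dialogue.moveAt] at hmj; subst hmj; simp [M1] at hAj
        · rintro ⟨r', h1, h2, _, _⟩; omega
      | k+3 => simp [dlg, Dialogue.moveAt] at hm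
    · intro n₁ n₂ r h₁ h₂
      have key : ∀ n r', IsDefenseOf (dlg p [M1, M2 p]) n r' → n = 2 := by
        intro n r' hd
        obtain ⟨m, hm, hA, hr⟩ := hd
        match n with
        | 0 => simp [dlg, Dialogue.moveAt] at hm
        | 1 => simp [dlg, Dialogue.moveAt] at hm; subst hm; simp [M1] at hA
        | 2 => rfl
        | k+3 => simp [dlg, Dialogue.moveAt] at hm
      rw [key _ _ h₁, key _ _ h₂]
    · intro n₁ n₂ r hr h₁ h₂
      have key : ∀ n, IsAttackOn (dlg p [M1, M2 p]) n r → n = 1 := by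
        intro n ha
        obtain ⟨m, hm, hA, hrr⟩ := ha
        match n with
        | 0 => simp [dlg, Dialogue.moveAt] at hm
        | 1 => rfl
        | 2 => simp [dlg, Dialogue.moveAt] at hm; subst hm; simp [M2] at hA
        | k+3 => simp [dlg, Dialogue.moveAt] at hm
      rw [key _ h₁, key _ h₂]
    · intro n m hn hm
      match n with
      | 0 => simp at hn
      | 1 => simp [dlg, Dialogue.moveAt] at hm; subst hm; simp [M1]
      | 2 => simp at hn
      | k+3 => simp [dlg, Dialogue.moveAt] at hm

private lemma legal4 (p : ℕ) : Legal rulesetEstar (dlg p [M1, M2 p, M3 p, M4 p]) := by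
  constructor
  · intro i m h
    match i with
    | 0 =>
      simp [dlg] at h
      subst h
      refine ⟨by norm_num [M1, M2 ,M3, M4], by norm_num [M1, M2, M3, M4], ?_, ?_⟩
      · intro _
        exact ⟨Fwem p, by simp [dlg, Dialogue.stmtAt, M1], Attacks.qmark _ _⟩
      · intro h; simp [M1] at h
    | 1 =>
      simp [dlg] at h
      subst h
      refine ⟨by norm_num [M1, M2 ,M3, M4], by norm_num [M1, M2, M3, M4], ?_, ?_⟩
      · intro h; simp [M2] at h
      · intro _
        refine ⟨M1, Formula.or (.neg (.atom p)) (.neg (.neg (.atom p))), ?_, rfl, ?_, ?_⟩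
        · simp [dlg, Dialogue.moveAt, M1, M2]
        · simp [dlg, Dialogue.stmtAt, M1, Fwem]
        · exact Defends.orR _ _
    | 2 =>
      simp [dlg] at h
      subst h
      refine ⟨by norm_num [M1, M2 ,M3, M4], by norm_num [M1, M2, M3, M4], ?_, ?_⟩
      · intro _
        refine ⟨.neg (.neg (.atom p)), ?_, Attacks.neg _⟩
        simp [dlg, Dialogue.stmtAt, M2, M3]
      · intro h; simp [M3] at h
    | 3 =>
      simp [dlg] at h
      subst h
      refine ⟨by norm_num [M1, M2 ,M3, M4], by norm_num [M1, M2, M3, M4], ?_, ?_⟩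
      · intro _
        refine ⟨.neg (.atom p), ?_, Attacks.neg _⟩
        simp [dlg, Dialogue.stmtAt, M3, M4]
      · intro h; simp [M4] at h
    | k+4 => simp [dlg] at h
  · refine ⟨?_, ?_, ?_, ?_, ?_⟩
    · intro n q hn hs
      match n with
      | 0 => simp [dlg, Dialogue.stmtAt, Fwem] at hs
      | 1 => simp [dlg, Dialogue.stmtAt, M1] at hs
      | 2 => simp [dlg, Dialogue.stmtAt, M2] at hs
      | 3 => simp at hn
      | 4 =>
        simp [dlg, Dialogue.stmtAt, M4] at hs
        subst hs
        exact ⟨3, by norm_num [M1, M2 ,M3, M4], by norm_num [M1, M2, M3, M4],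
          Or.inr (by simp [dlg, Dialogue.stmtAt, M3])⟩
      | k+5 => simp [dlg, Dialogue.stmtAt] at hs
    · intro n r hd
      obtain ⟨m, hm, hA, hr⟩ := hd
      match n with
      | 0 => simp [dlg, Dialogue.moveAt] at hm
      | 1 => simp [dlg, Dialogue.moveAt] at hm; subst hm; simp [M1] at hA
      | 2 =>
        simp [dlg, Dialogue.moveAt, M2] at hm; subst hm
        simp [M2] at hr; subst hr
        refine ⟨⟨⟨M1, by simp [dlg, Dialogue.moveAt], rfl⟩, ?_⟩, ?_⟩
        · rintro ⟨j, hj, mj, hmj, hAj, hrj⟩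
          match j with
          | 0 => simp [dlg, Dialogue.moveAt] at hmj
          | 1 => simp [dlg, Dialogue.moveAt] at hmj; subst hmj; simp [M1] at hAj
        · rintro ⟨r', h1, h2, _, _⟩; omega
      | 3 => simp [dlg, Dialogue.moveAt] at hm; subst hm; simp [M3] at hA
      | 4 => simp [dlg, Dialogue.moveAt] at hm; subst hm; simp [M4] at hA
      | k+5 => simp [dlg, Dialogue.moveAt] at hm
    · intro n₁ n₂ r h₁ h₂
      have key : ∀ n r', IsDefenseOf (dlg p [M1, M2 p, M3 p, M4 p]) n r' → n = 2 := by
        intro n r' hd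
        obtain ⟨m, hm, hA, hr⟩ := hd
        match n with
        | 0 => simp [dlg, Dialogue.moveAt] at hm
        | 1 => simp [dlg, Dialogue.moveAt] at hm; subst hm; simp [M1] at hA
        | 2 => rfl
        | 3 => simp [dlg, Dialogue.moveAt] at hm; subst hm; simp [M3] at hA
        | 4 => simp [dlg, Dialogue.moveAt] at hm; subst hm; simp [M4] at hA
        | k+5 => simp [dlg, Dialogue.moveAt] at hm
      rw [key _ _ h₁, key _ _ h₂]
    · intro n₁ n₂ r hr h₁ h₂
      have key : ∀ n, IsAttackOn (dlg p [M1, M2 p, M3 p, M4 p]) n r → n = 1 ∨ n = 3 := by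
        intro n ha
        obtain ⟨m, hm, hA, hrr⟩ := ha
        match n with
        | 0 => simp [dlg, Dialogue.moveAt] at hm
        | 1 => exact Or.inl rfl
        | 2 => simp [dlg, Dialogue.moveAt] at hm; subst hm; simp [M2] at hA
        | 3 => exact Or.inr rfl
        | 4 => exact absurd hrr.symm (by
            simp [dlg, Dialogue.moveAt] at hm; subst hm; simp [M4]
            omega)
        | k+5 => simp [dlg, Dialogue.moveAt] at hm
      have ref1 : ∀ n, IsAttackOn (dlg p [M1, M2 p, M3 p, M4 p]) n r → n = 1 → r = 0 := by
        rintro n ⟨m, hm, hA, hrr⟩ rfl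
        simp [dlg, Dialogue.moveAt] at hm; subst hm; simp [M1] at hrr; omega
      have ref3 : ∀ n, IsAttackOn (dlg p [M1, M2 p, M3 p, M4 p]) n r → n = 3 → r = 2 := by
        rintro n ⟨m, hm, hA, hrr⟩ rfl
        simp [dlg, Dialogue.moveAt] at hm; subst hm; simp [M3] at hrr; omega
      rcases key _ h₁ with e₁ | e₁ <;> rcases key _ h₂ with e₂ | e₂
      · rw [e₁, e₂]
      · exact absurd ((ref1 _ h₁ e₁).symm.trans (ref3 _ h₂ e₂)) (by norm_num)
      · exact absurd ((ref3 _ h₁ e₁).symm.trans (ref1 _ h₂ e₂)) (by norm_num)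
      · rw [e₁, e₂]
    · intro n m hn hm
      match n with
      | 0 => simp at hn
      | 1 => simp [dlg, Dialogue.moveAt] at hm; subst hm; simp [M1]
      | 2 => simp at hn
      | 3 => simp [dlg, Dialogue.moveAt] at hm; subst hm; simp [M3]
      | 4 => simp at hn
      | k+5 => simp [dlg, Dialogue.moveAt] at hm


private lemma win4 (p : ℕ) :
    PWinningC rulesetEstar (fun _ _ => True) (dlg p [M1, M2 p, M3 p, M4 p]) := by
  apply PWinningC.oMoves
  · norm_num [PTurn, nextPos, dlg]
  intro m hm
  exfalso
  obtain ⟨s, b, r⟩ := m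
  have hP : ParticleOK ((dlg p [M1, M2 p, M3 p, M4 p]).extend ⟨s, b, r⟩) := hm.1
  have hE : ERule ((dlg p [M1, M2 p, M3 p, M4 p]).extend ⟨s, b, r⟩) := hm.2.2.2.2.2
  have href : r = 4 := by
    have h5 := hE 5 ⟨s, b, r⟩ (by norm_num)
      (by simp [Dialogue.moveAt, Dialogue.extend, dlg])
    simpa using h5
  subst href
  obtain ⟨-, -, hatt, hdef⟩ := hP 4 ⟨s, b, 4⟩ (by simp [Dialogue.extend, dlg])
  cases b
  · obtain ⟨a, χ, ha, haA, hχ, hd⟩ := hdef rfl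
    simp [Dialogue.moveAt, Dialogue.extend, dlg, M4] at ha
    subst ha
    simp [Dialogue.stmtAt, Dialogue.extend, dlg, M3, M4] at hχ
    subst hχ
    cases hd
  · obtain ⟨ψ, hψ, hatk⟩ := hatt rfl
    simp [Dialogue.stmtAt, Dialogue.extend, dlg, M4] at hψ
    subst hψ
    cases hatk

private lemma win2 (p : ℕ) :
    PWinningC rulesetEstar (fun _ _ => True) (dlg p [M1, M2 p]) := by
  apply PWinningC.oMoves
  · norm_num [PTurn, nextPos, dlg]
  intro m hm
  obtain ⟨s, b, r⟩ := m
  have hP : ParticleOK ((dlg p [M1, M2 p]).extend ⟨s, b, r⟩) := hm.1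
  have hE : ERule ((dlg p [M1, M2 p]).extend ⟨s, b, r⟩) := hm.2.2.2.2.2
  have href : r = 2 := by
    have h3 := hE 3 ⟨s, b, r⟩ (by norm_num)
      (by simp [Dialogue.moveAt, Dialogue.extend, dlg])
    simpa using h3
  subst href
  obtain ⟨-, -, hatt, hdef⟩ := hP 2 ⟨s, b, 2⟩ (by simp [Dialogue.extend, dlg])
  cases b
  · exfalso
    obtain ⟨a, χ, ha, haA, -, -⟩ := hdef rfl
    simp [Dialogue.moveAt, Dialogue.extend, dlg, M2] at ha
    subst ha
    simp [M2] at haA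
  · obtain ⟨ψ, hψ, hatk⟩ := hatt rfl
    simp [Dialogue.stmtAt, Dialogue.extend, dlg, M2] at hψ
    subst hψ
    cases hatk
    exact PWinningC.pMove _ (M4 p)
      (by norm_num [PTurn, nextPos, dlg, Dialogue.extend])
      (legal4 p) trivial (win4 p)

private lemma win0 (p : ℕ) : PWinning rulesetEstar (dlg p []) := by
  apply PWinningC.oMoves
  · norm_num [PTurn, nextPos, dlg]
  intro m hm
  obtain ⟨s, b, r⟩ := m
  have hP : ParticleOK ((dlg p []).extend ⟨s, b, r⟩) := hm.1
  have hE : ERule ((dlg p []).extend ⟨s, b, r⟩) := hm.2.2.2.2.2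
  have href : r = 0 := by
    have h1 := hE 1 ⟨s, b, r⟩ (by norm_num)
      (by simp [Dialogue.moveAt, Dialogue.extend, dlg])
    simpa using h1
  subst href
  obtain ⟨-, -, hatt, hdef⟩ := hP 0 ⟨s, b, 0⟩ (by simp [Dialogue.extend, dlg])
  cases b
  · exfalso
    obtain ⟨a, χ, ha, -, -, -⟩ := hdef rfl
    simp [Dialogue.moveAt, Dialogue.extend, dlg] at ha
  · obtain ⟨ψ, hψ, hatk⟩ := hatt rfl
    simp [Dialogue.stmtAt, Dialogue.extend, dlg, Fwem] at hψ
    subst hψ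
    cases hatk
    exact PWinningC.pMove _ (M2 p)
      (by norm_num [PTurn, nextPos, dlg, Dialogue.extend])
      (legal2 p) trivial (win2 p)

end WEM

/-- For every atom p, weak excluded middle ¬p ∨ ¬¬p is E*-valid. -/
theorem wem_Estar_valid (p : ℕ) :
    valid rulesetEstar (.or (.neg (.atom p)) (.neg (.neg (.atom p)))) :=
  ⟨legal0 p, win0 p⟩

end LorenzenDialogues
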